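/- Let p be a prime and let R be a finite commutative local ring with maximal ideal M whose residue field has characteristic p. If a ∈ M but a ∉ M^2, then (a + (R^×)^p) ∩ (R^×)^p = ∅; that is, for all units x, y ∈ R^× one has a + x^p ≠ y^p. -/

import Mathlib

theorem stmt_13 (p : ℕ) (hp : p.Prime) (R : Type*) [CommRing R] [IsLocalRing R] [Fintype R]
    (hchar : CharP (IsLocalRing.ResidueField R) p)
    (a : R) (ha : a ∈ IsLocalRing.maximalIdeal R)
    (ha2 : a ∉ (IsLocalRing.maximalIdeal R) ^ 2) :
    ∀ x y : Rˣ, a + (x : R) ^ p ≠ (y : R) ^ p := by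
  haveI := Fact.mk hp
  intro x y h
  set φ := IsLocalRing.residue R with hφ
  set u : R := (y : R) * ((x⁻¹ : Rˣ) : R) with hu
  have hux : u * (x : R) = (y : R) := by
    rw [hu, mul_assoc, Units.inv_mul, mul_one]
  have key : (u ^ p - 1) * (x : R) ^ p = a := by
    rw [sub_mul, one_mul, ← mul_pow, hux, ← h]; ring
  have hxne : φ (x : R) ≠ 0 := by
    rw [hφ, Ne, IsLocalRing.residue_eq_zero_iff]
    exact fun hm => (IsLocalRing.maximalIdeal.isMaximal R).ne_top
      (Ideal.eq_top_of_isUnit_mem _ hm x.isUnit)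
  have hφa : φ a = 0 := (IsLocalRing.residue_eq_zero_iff a).mpr ha
  have hupm : φ (u ^ p - 1) = 0 := by
    have := congrArg φ key
    rw [map_mul, map_pow, hφa] at this
    rcases mul_eq_zero.mp this with h1 | h1
    · exact h1
    · exact absurd (pow_eq_zero_iff hp.ne_zero |>.mp h1) hxne
  have hφu : φ u = 1 := by
    have h2 : (φ u) ^ p = 1 := by
      have := hupm
      rw [map_sub, map_pow, map_one, sub_eq_zero] at this
      exact this
    have h3 : (φ u - 1) ^ p = 0 := by
      rw [sub_pow_char, h2, one_pow, sub_self]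
    have := pow_eq_zero_iff hp.ne_zero |>.mp h3
    linear_combination this
  have hm : u - 1 ∈ IsLocalRing.maximalIdeal R := by
    rw [← IsLocalRing.residue_eq_zero_iff, map_sub, map_one, hφu, sub_self]
  have hs : (∑ i ∈ Finset.range p, u ^ i) ∈ IsLocalRing.maximalIdeal R := by
    rw [← IsLocalRing.residue_eq_zero_iff, map_sum]
    have : ∀ i, φ (u ^ i) = 1 := fun i => by rw [map_pow, hφu, one_pow]
    simp only [← hφ, this, Finset.sum_const, Finset.card_range, nsmul_eq_mul, mul_one]
    exact CharP.cast_eq_zero _ p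
  have hM2 : u ^ p - 1 ∈ (IsLocalRing.maximalIdeal R) ^ 2 := by
    rw [← geom_sum_mul, sq]
    exact Ideal.mul_mem_mul hs hm
  exact ha2 (key ▸ Ideal.mul_mem_right _ _ hM2)
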